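/- Let T ⊂ ℝ^3 be a tetrahedron with vertices p1, p2, p3, p4, let q_i = (p1+p2+p3+p4)/2 − p_i, let C(T) = conv(p1,…,p4,q1,…,q4), and let T_i = conv(q_i, p_j, p_k, p_l) for {i,j,k,l} = {1,2,3,4} be the corner tetrahedra. Then C(T) is the union of T and the four corner tetrahedra: C(T) = T ∪ T_1 ∪ T_2 ∪ T_3 ∪ T_4. -/

import Mathlib

noncomputable section

/-- The vertex `qᵢ = (p₁+p₂+p₃+p₄)/2 − pᵢ` of the circumscribed parallelepiped. -/
def oppVert (p : Fin 4 → Fin 3 → ℝ) (i : Fin 4) : Fin 3 → ℝ :=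
  (1/2 : ℝ) • (p 0 + p 1 + p 2 + p 3) - p i

/-- The corner tetrahedron `Tᵢ = conv(qᵢ, pⱼ, pₖ, pₗ)` for `{i,j,k,l} = {1,2,3,4}`. -/
def cornerTet (p : Fin 4 → Fin 3 → ℝ) (i : Fin 4) : Set (Fin 3 → ℝ) :=
  convexHull ℝ ({oppVert p i} ∪ p '' {j | j ≠ i})

/-- The circumscribed parallelepiped `C(T) = conv(p₁,…,p₄,q₁,…,q₄)` is the union
of the tetrahedron `T` and the four corner tetrahedra. -/
theorem circumscribed_parallelepiped_decomposition
    (p : Fin 4 → Fin 3 → ℝ) (hp : AffineIndependent ℝ p) :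
    convexHull ℝ (Set.range p ∪ Set.range (oppVert p)) =
      convexHull ℝ (Set.range p) ∪ ⋃ i : Fin 4, cornerTet p i := by
  classical
  have htop : affineSpan ℝ (Set.range p) = ⊤ := by
    rw [hp.affineSpan_eq_top_iff_card_eq_finrank_add_one]
    simp
  let b : AffineBasis (Fin 4) ℝ (Fin 3 → ℝ) := ⟨p, hp, htop⟩
  set w : (Fin 3 → ℝ) → Fin 4 → ℝ := fun x i => b.coord i x with hwdef
  have hbp : ∀ i, b i = p i := fun i => rfl
  have hrep : ∀ x, ∑ i, w x i • p i = x := fun x => b.linear_combination_coord_eq_self x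
  have hsum : ∀ x, ∑ i, w x i = 1 := fun x => b.sum_coord_apply_eq_one x
  -- coordinates of the vertices
  have hwp : ∀ i j, w (p j) i = if i = j then 1 else 0 := by
    intro i j
    exact b.coord_apply i j
  have hwq : ∀ i j, w (oppVert p j) i = 1 / 2 - (if i = j then 1 else 0) := by
    intro i j
    have hs : ∑ k : Fin 4, ((1 : ℝ) / 2 - if k = j then 1 else 0) = 1 := by
      rw [Finset.sum_sub_distrib, Finset.sum_ite_eq' Finset.univ j fun _ => (1 : ℝ)]
      simp [Fin.sum_univ_four]
      norm_num
    have hq : oppVert p j =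
        Finset.univ.affineCombination ℝ p (fun k => (1 : ℝ) / 2 - if k = j then 1 else 0) := by
      rw [Finset.univ.affineCombination_eq_linear_combination _ _ hs]
      fin_cases j <;>
        simp [oppVert, Fin.sum_univ_four, sub_smul, smul_add]
    rw [hwdef]
    simp only [hq]
    exact b.coord_apply_combination_of_mem (Finset.mem_univ i) hs
  -- every point of the hull satisfies the pairwise inequalities
  have hS : ∀ x ∈ convexHull ℝ (Set.range p ∪ Set.range (oppVert p)),
      ∀ i j, i ≠ j → 0 ≤ w x i + w x j := by
    intro x hx
    have hconv : Convex ℝ {x | ∀ i j, i ≠ j → 0 ≤ w x i + w x j} := by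
      intro u hu v hv a c ha hc hac
      intro i j hij
      have hcu : ∀ k : Fin 4, w (a • u + c • v) k = a * w u k + c * w v k := by
        intro k
        have := Convex.combo_affine_apply (f := b.coord k) hac (x := u) (y := v)
        simpa [hwdef, smul_eq_mul] using this
      rw [hcu i, hcu j]
      have h1 := hu i j hij
      have h2 := hv i j hij
      nlinarith
    have hsub : Set.range p ∪ Set.range (oppVert p) ⊆
        {x | ∀ i j, i ≠ j → 0 ≤ w x i + w x j} := by
      rintro x (⟨k, rfl⟩ | ⟨k, rfl⟩) <;> intro i j hij
      · rw [hwp, hwp]; split_ifs <;> norm_num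
      · rw [hwq, hwq]
        split_ifs with h1 h2 h2
        · exact absurd (h1.trans h2.symm) hij
        · norm_num
        · norm_num
        · norm_num
    exact fun i j hij => (convexHull_min hsub hconv hx) i j hij
  apply Set.Subset.antisymm
  · -- hard direction
    intro x hx
    have hpair := hS x hx
    by_cases hnn : ∀ i, 0 ≤ w x i
    · left
      have := Finset.univ.centerMass_mem_convexHull (w := w x) (z := p)
        (fun i _ => hnn i) (by rw [hsum]; norm_num) (fun i _ => Set.mem_range_self i)
      rwa [Finset.centerMass_eq_of_sum_1 _ _ (hsum x), hrep] at this
    · right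
      push_neg at hnn
      obtain ⟨i₀, hi₀⟩ := hnn
      refine Set.mem_iUnion.2 ⟨i₀, ?_⟩
      set w' : Fin 4 → ℝ := fun j => if j = i₀ then -2 * w x i₀ else w x j + w x i₀ with hw'
      set z : Fin 4 → Fin 3 → ℝ := fun j => if j = i₀ then oppVert p i₀ else p j with hz
      have hw'nn : ∀ j, 0 ≤ w' j := by
        intro j
        rw [hw']
        by_cases h : j = i₀
        · simp [h]; linarith
        · simp [h]
          have := hpair j i₀ h
          linarith
      have hw'sum : ∑ j, w' j = 1 := by
        have h4 := hsum x
        rw [Fin.sum_univ_four] at h4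
        rw [hw']
        fin_cases i₀ <;> simp [Fin.sum_univ_four] <;> linarith
      have hxz : ∑ j, w' j • z j = x := by
        conv_rhs => rw [← hrep x]
        rw [hw', hz]
        fin_cases i₀ <;>
          · simp [Fin.sum_univ_four, oppVert]
            module
      have hmem : ∀ j, z j ∈ ({oppVert p i₀} ∪ p '' {j | j ≠ i₀} : Set (Fin 3 → ℝ)) := by
        intro j
        rw [hz]
        by_cases h : j = i₀
        · simp [h]
        · exact Or.inr ⟨j, h, by simp [h]⟩
      have := Finset.univ.centerMass_mem_convexHull (w := w') (z := z)
        (fun j _ => hw'nn j) (by rw [hw'sum]; norm_num) (fun j _ => hmem j)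
      rw [Finset.centerMass_eq_of_sum_1 _ _ hw'sum, hxz] at this
      exact this
  · -- easy direction
    apply Set.union_subset
    · exact convexHull_mono Set.subset_union_left
    · refine Set.iUnion_subset fun i => ?_
      apply convexHull_mono
      rintro x (rfl | ⟨j, _, rfl⟩)
      · exact Or.inr ⟨i, rfl⟩
      · exact Or.inl ⟨j, rfl⟩
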